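/- arXiv:2512.16359 — 2 statements merged into one kernel-verified Lean document; each statement's English description precedes it below -/
import Mathlib

section
/- Let f be four times continuously differentiable on an open set Ω ⊆ ℝ² containing the closed disk of radius R centered at (x₀, y₀). Then the error in the two-circle point value formula improves to fourth order: f(x₀, y₀) = (1/3)·[ (4/(2π))·∫₀^{2π} f(x₀ + (R/2)cos θ, y₀ + (R/2)sin θ) dθ − (1/(2π))·∫₀^{2π} f(x₀ + R cos θ, y₀ + R sin θ) dθ ] + O(R⁴) as R → 0⁺. -/
open Real MeasureTheory Set Topology

/-- within = global for iterated derivs on nice subsets of an open set. -/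
lemma within_eq_global {g : ℝ → ℝ} {U : Set ℝ} (hU : IsOpen U)
    (hg : ContDiffOn ℝ 4 g U) {s : Set ℝ} (hs : UniqueDiffOn ℝ s) (hsU : s ⊆ U)
    {x : ℝ} (hx : x ∈ s) {n : ℕ} (hn : (n : WithTop ℕ∞) ≤ 4) :
    iteratedDerivWithin n g s x = iteratedDeriv n g x := by
  rw [iteratedDerivWithin_eq_iteratedFDerivWithin, iteratedDeriv_eq_iteratedFDeriv]
  congr 1
  have H : HasFTaylorSeriesUpToOn 4 g (ftaylorSeriesWithin ℝ g U) U :=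
    hg.ftaylorSeriesWithin hU.uniqueDiffOn
  have h1 := (H.mono hsU).eq_iteratedFDerivWithin_of_uniqueDiffOn hn hs hx
  rw [← h1]
  exact (iteratedFDerivWithin_of_isOpen n hU (hsU hx))

lemma line_iteratedDeriv {f : ℝ × ℝ → ℝ} {Ω : Set (ℝ × ℝ)} (hΩ : IsOpen Ω)
    (hf : ContDiffOn ℝ 4 f Ω) (v : ℝ × ℝ) :
    ∀ k : ℕ, (k : WithTop ℕ∞) ≤ 4 → ∀ x ∈ Ω,
      iteratedDeriv k (fun t : ℝ => f (x + t • v)) 0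
        = iteratedFDeriv ℝ k f x (fun _ => v) := by
  intro k
  induction k with
  | zero =>
    intro _ x hx
    simp [iteratedDeriv_zero, iteratedFDeriv_zero_apply]
  | succ k IH =>
    intro hk x hx
    have hk' : (k : ℕ) + 1 ≤ 4 := by exact_mod_cast hk
    have hk4 : (k : WithTop ℕ∞) ≤ 4 := by exact_mod_cast (by omega : k ≤ 4)
    rw [iteratedDeriv_succ]
    have hev : (fun t : ℝ => iteratedDeriv k (fun s : ℝ => f (x + s • v)) t)
        =ᶠ[𝓝 (0:ℝ)] fun t => iteratedFDeriv ℝ k f (x + t • v) (fun _ => v) := by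
      have hcont : Continuous fun t : ℝ => x + t • v := by continuity
      have hU : IsOpen {t : ℝ | x + t • v ∈ Ω} := hΩ.preimage hcont
      have h0 : (0:ℝ) ∈ {t : ℝ | x + t • v ∈ Ω} := by simpa using hx
      filter_upwards [hU.mem_nhds h0] with t ht
      have e1 : iteratedDeriv k (fun s : ℝ => f (x + s • v)) t
          = iteratedDeriv k (fun u : ℝ => f ((x + t • v) + u • v)) 0 := by
        have h2 := iteratedDeriv_comp_const_add k (fun s : ℝ => f (x + s • v)) t
        have h3 : (fun z : ℝ => f (x + (t + z) • v))
            = fun u : ℝ => f ((x + t • v) + u • v) := by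
          funext u; rw [add_smul, add_assoc]
        rw [← h3]
        rw [congrFun h2 0, add_zero]
      rw [e1, IH hk4 (x + t • v) ht]
    rw [hev.deriv_eq]
    have hca : ContDiffAt ℝ 4 f x := hf.contDiffAt (hΩ.mem_nhds hx)
    have hdf : DifferentiableAt ℝ (iteratedFDeriv ℝ k f) x := by
      have h5 : ContDiffAt ℝ 1 (iteratedFDeriv ℝ k f) x := by
        apply hca.iteratedFDeriv_right
        exact_mod_cast (by omega : 1 + k ≤ 4)
      exact h5.differentiableAt one_ne_zero
    have hc : HasDerivAt (fun t : ℝ => x + t • v) v 0 := by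
      simpa using ((hasDerivAt_id (0:ℝ)).smul_const v).const_add x
    have h1 : HasDerivAt (fun t : ℝ => iteratedFDeriv ℝ k f (x + t • v))
        (fderiv ℝ (iteratedFDeriv ℝ k f) x v) 0 := by
      have hdf' : HasFDerivAt (iteratedFDeriv ℝ k f) (fderiv ℝ (iteratedFDeriv ℝ k f) x) (x + (0:ℝ) • v) := by
        simpa using hdf.hasFDerivAt
      have := hdf'.comp_hasDerivAt 0 hc
      exact this
    have h2 : HasDerivAt (fun t : ℝ => iteratedFDeriv ℝ k f (x + t • v) (fun _ => v))
        ((fderiv ℝ (iteratedFDeriv ℝ k f) x v) (fun _ => v)) 0 := by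
      have := ((ContinuousMultilinearMap.apply ℝ (fun _ : Fin k => ℝ × ℝ) ℝ
        (fun _ => v)).hasFDerivAt).comp_hasDerivAt 0 h1
      exact this
    rw [h2.deriv, iteratedFDeriv_succ_apply_left]
    rfl

lemma line_iteratedDeriv' {f : ℝ × ℝ → ℝ} {Ω : Set (ℝ × ℝ)} (hΩ : IsOpen Ω)
    (hf : ContDiffOn ℝ 4 f Ω) (v : ℝ × ℝ) {k : ℕ} (hk : (k : WithTop ℕ∞) ≤ 4)
    {x : ℝ × ℝ} {t : ℝ} (ht : x + t • v ∈ Ω) :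
    iteratedDeriv k (fun t : ℝ => f (x + t • v)) t
      = iteratedFDeriv ℝ k f (x + t • v) (fun _ => v) := by
  have e1 : iteratedDeriv k (fun s : ℝ => f (x + s • v)) t
      = iteratedDeriv k (fun u : ℝ => f ((x + t • v) + u • v)) 0 := by
    have h2 := iteratedDeriv_comp_const_add k (fun s : ℝ => f (x + s • v)) t
    have h3 : (fun z : ℝ => f (x + (t + z) • v))
        = fun u : ℝ => f ((x + t • v) + u • v) := by
      funext u; rw [add_smul, add_assoc]
    rw [← h3, congrFun h2 0, add_zero]
  rw [e1, line_iteratedDeriv hΩ hf v k hk _ ht]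

/-- Taylor bound along a ray. -/
lemma taylor_circle_bound {f : ℝ × ℝ → ℝ} {Ω : Set (ℝ × ℝ)} (hΩ : IsOpen Ω)
    (hf : ContDiffOn ℝ 4 f Ω) {p : ℝ × ℝ} {ρ : ℝ}
    (hball : Metric.closedBall p ρ ⊆ Ω) {M : ℝ}
    (hM : ∀ y ∈ Metric.closedBall p ρ, ‖iteratedFDeriv ℝ 4 f y‖ ≤ M)
    {r : ℝ} (hr0 : 0 ≤ r) (hrρ : r ≤ ρ) {w : ℝ × ℝ} (hw : ‖w‖ ≤ 1) :
    |f (p + r • w) - (f p + r * iteratedFDeriv ℝ 1 f p (fun _ => w)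
      + (r^2/2) * iteratedFDeriv ℝ 2 f p (fun _ => w)
      + (r^3/6) * iteratedFDeriv ℝ 3 f p (fun _ => w))| ≤ (M/6) * r^4 := by
  set u : ℝ × ℝ := r • w with hu
  have hru : ‖u‖ ≤ r := by
    rw [hu, norm_smul, Real.norm_eq_abs, abs_of_nonneg hr0]
    nlinarith [norm_nonneg w]
  have hmem : ∀ t : ℝ, t ∈ Icc (0:ℝ) 1 → p + t • u ∈ Metric.closedBall p ρ := by
    intro t ht
    rw [Metric.mem_closedBall, dist_eq_norm]
    have : ‖p + t • u - p‖ = ‖t • u‖ := by congr 1; abel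
    rw [this, norm_smul, Real.norm_eq_abs, abs_of_nonneg ht.1]
    calc t * ‖u‖ ≤ 1 * r := by
          apply mul_le_mul ht.2 hru (norm_nonneg u) zero_le_one
      _ ≤ ρ := by linarith
  set g : ℝ → ℝ := fun t => f (p + t • u) with hg
  have hU : IsOpen {t : ℝ | p + t • u ∈ Ω} := hΩ.preimage (by continuity)
  have hIccU : Icc (0:ℝ) 1 ⊆ {t : ℝ | p + t • u ∈ Ω} :=
    fun t ht => hball (hmem t ht)
  have hgC : ContDiffOn ℝ 4 g {t : ℝ | p + t • u ∈ Ω} := by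
    apply hf.comp
    · exact (contDiff_const.add ((contDiff_id.smul contDiff_const))).contDiffOn
    · exact fun t ht => ht
  -- iterated derivs within Icc 0 1 are the multilinear ones
  have hiter : ∀ (n : ℕ), (n : WithTop ℕ∞) ≤ 4 → ∀ t ∈ Icc (0:ℝ) 1,
      iteratedDerivWithin n g (Icc (0:ℝ) 1) t
        = iteratedFDeriv ℝ n f (p + t • u) (fun _ => u) := by
    intro n hn t ht
    rw [within_eq_global hU hgC (uniqueDiffOn_Icc zero_lt_one) hIccU ht hn]
    exact line_iteratedDeriv' hΩ hf u hn (hIccU ht)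
  have hC : ∀ y ∈ Icc (0:ℝ) 1,
      ‖iteratedDerivWithin 4 g (Icc (0:ℝ) 1) y‖ ≤ M * r^4 := by
    intro y hy
    rw [hiter 4 (by norm_num) y hy]
    calc ‖iteratedFDeriv ℝ 4 f (p + y • u) (fun _ => u)‖
        ≤ ‖iteratedFDeriv ℝ 4 f (p + y • u)‖ * ∏ _i : Fin 4, ‖u‖ :=
          (iteratedFDeriv ℝ 4 f (p + y • u)).le_opNorm _
      _ ≤ M * r^4 := by
          rw [Finset.prod_const]
          simp only [Finset.card_univ, Fintype.card_fin]
          apply mul_le_mul (hM _ (hmem y hy)) (pow_le_pow_left₀ (norm_nonneg u) hru 4)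
            (by positivity) ((norm_nonneg _).trans (hM _ (hmem 0 (by norm_num))))
  have hgc : ContDiffOn ℝ ((3:ℕ) + 1) g (Icc (0:ℝ) 1) := by
    apply (hgC.mono hIccU).of_le
    norm_num
  have htay := taylor_mean_remainder_bound (f := g) (a := 0) (b := 1) (x := 1)
    (n := 3) zero_le_one hgc (by norm_num) hC
  rw [taylor_within_apply] at htay
  have hsum : ∑ k ∈ Finset.range (3+1), (((k.factorial : ℕ) : ℝ)⁻¹ * ((1:ℝ) - 0) ^ k) •
      iteratedDerivWithin k g (Icc (0:ℝ) 1) 0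
      = f p + r * iteratedFDeriv ℝ 1 f p (fun _ => w)
      + (r^2/2) * iteratedFDeriv ℝ 2 f p (fun _ => w)
      + (r^3/6) * iteratedFDeriv ℝ 3 f p (fun _ => w) := by
    have h0 : (0:ℝ) ∈ Icc (0:ℝ) 1 := by norm_num
    have e : ∀ n : ℕ, (n : WithTop ℕ∞) ≤ 4 →
        iteratedDerivWithin n g (Icc (0:ℝ) 1) 0
          = r ^ n * iteratedFDeriv ℝ n f p (fun _ => w) := by
      intro n hn
      rw [hiter n hn 0 h0]
      have : p + (0:ℝ) • u = p := by simp
      rw [this]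
      have : (fun _ : Fin n => u) = fun _ : Fin n => r • w := rfl
      calc iteratedFDeriv ℝ n f p (fun _ => u)
          = iteratedFDeriv ℝ n f p (fun i => (fun _ : Fin n => r) i • (fun _ : Fin n => w) i) := rfl
        _ = (∏ _i : Fin n, r) • iteratedFDeriv ℝ n f p (fun _ => w) :=
            (iteratedFDeriv ℝ n f p).map_smul_univ _ _
        _ = r ^ n * iteratedFDeriv ℝ n f p (fun _ => w) := by
            rw [Finset.prod_const]; simp [Finset.card_univ]
    rw [Finset.sum_range_succ, Finset.sum_range_succ, Finset.sum_range_succ,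
      Finset.sum_range_one]
    rw [e 0 (by norm_num), e 1 (by norm_num), e 2 (by norm_num), e 3 (by norm_num)]
    simp [Nat.factorial]
    ring
  rw [hsum] at htay
  have hg1 : g 1 = f (p + r • w) := by rw [hg]; simp [hu]
  rw [hg1] at htay
  rw [Real.norm_eq_abs] at htay
  have heq : M * r ^ 4 * ((1:ℝ) - 0) ^ (3 + 1) / ((Nat.factorial 3 : ℕ) : ℝ)
      = (M/6) * r^4 := by
    norm_num [Nat.factorial]; ring
  exact htay.trans (le_of_eq heq)

/-- Two-circle point-value formula with fourth-order error for `C⁴` functions. -/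
theorem stmt_1 (f : ℝ × ℝ → ℝ) (Ω : Set (ℝ × ℝ)) (hΩ : IsOpen Ω)
    (x₀ y₀ : ℝ) (hmem : (x₀, y₀) ∈ Ω) (hf : ContDiffOn ℝ 4 f Ω) :
    ∃ C > (0:ℝ), ∃ R₀ > (0:ℝ), ∀ R : ℝ, 0 < R → R ≤ R₀ →
      Metric.closedBall (x₀, y₀) R ⊆ Ω →
      |f (x₀, y₀) -
        (1/3) * ((4/(2*π)) *
            (∫ θ in (0:ℝ)..(2*π), f (x₀ + (R/2) * Real.cos θ, y₀ + (R/2) * Real.sin θ))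
          - (1/(2*π)) *
            (∫ θ in (0:ℝ)..(2*π), f (x₀ + R * Real.cos θ, y₀ + R * Real.sin θ)))|
        ≤ C * R^4 := by
  set p : ℝ × ℝ := (x₀, y₀) with hp
  obtain ⟨ε, hε, hεΩ⟩ := Metric.isOpen_iff.1 hΩ p hmem
  set ρ : ℝ := ε/2 with hρdef
  have hρ : 0 < ρ := by positivity
  have hball : Metric.closedBall p ρ ⊆ Ω :=
    (Metric.closedBall_subset_ball (by simp [hρdef]; linarith)).trans hεΩ
  have hcont : ContinuousOn (iteratedFDeriv ℝ 4 f) (Metric.closedBall p ρ) := by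
    intro x hx
    have hca : ContDiffAt ℝ 4 f x := hf.contDiffAt (hΩ.mem_nhds (hball hx))
    have h0 : ContDiffAt ℝ 0 (iteratedFDeriv ℝ 4 f) x :=
      hca.iteratedFDeriv_right (by norm_num)
    exact h0.continuousAt.continuousWithinAt
  obtain ⟨M, hM⟩ := (isCompact_closedBall p ρ).exists_bound_of_continuousOn hcont
  have hM0 : 0 ≤ M := (norm_nonneg _).trans (hM p (Metric.mem_closedBall_self hρ.le))
  set v : ℝ → ℝ × ℝ := fun θ => (Real.cos θ, Real.sin θ) with hv
  have hvcont : Continuous v := continuous_cos.prodMk continuous_sin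
  have hvnorm : ∀ θ, ‖v θ‖ ≤ 1 := by
    intro θ
    rw [hv]
    rw [Prod.norm_def]
    exact max_le (by simpa using abs_cos_le_one θ) (by simpa using abs_sin_le_one θ)
  set D : ℕ → ℝ → ℝ := fun k θ => iteratedFDeriv ℝ k f p (fun _ => v θ) with hD
  have hDcont : ∀ k, Continuous (D k) := fun k =>
    (iteratedFDeriv ℝ k f p).coe_continuous.comp (continuous_pi fun _ => hvcont)
  -- odd moments vanish
  have hodd : ∀ k : ℕ, Odd k → (∫ θ in (0:ℝ)..(2*π), D k θ) = 0 := by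
    intro k hk
    have hDshift : ∀ θ, D k (θ + π) = -D k θ := by
      intro θ
      have hvs : v (θ + π) = (-1 : ℝ) • v θ := by
        rw [hv]; simp [Real.cos_add_pi, Real.sin_add_pi, Prod.ext_iff]
      rw [hD]
      simp only
      rw [hvs]
      calc iteratedFDeriv ℝ k f p (fun _ => (-1:ℝ) • v θ)
          = iteratedFDeriv ℝ k f p
              (fun i => (fun _ : Fin k => (-1:ℝ)) i • (fun _ : Fin k => v θ) i) := rfl
        _ = (∏ _i : Fin k, (-1:ℝ)) • iteratedFDeriv ℝ k f p (fun _ => v θ) :=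
            (iteratedFDeriv ℝ k f p).map_smul_univ _ _
        _ = -D k θ := by
            rw [Finset.prod_const]
            simp only [Finset.card_univ, Fintype.card_fin, hk.neg_one_pow]
            rw [hD]; simp
    have hper : Function.Periodic (D k) (2*π) := by
      intro θ
      rw [hD]
      simp only
      congr 2
      funext i
      rw [hv]
      simp [Real.cos_add_two_pi, Real.sin_add_two_pi]
    have h1 : (∫ θ in (0:ℝ)..(2*π), D k (θ + π)) = ∫ θ in (0:ℝ)..(2*π), D k θ := by
      rw [intervalIntegral.integral_comp_add_right (fun θ => D k θ) π]
      have h2 := hper.intervalIntegral_add_eq π 0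
      rw [show (0:ℝ) + π = π from by ring, show 2*π + π = π + 2*π from by ring, h2]
      norm_num
    have h3 : (∫ θ in (0:ℝ)..(2*π), D k (θ + π)) = -∫ θ in (0:ℝ)..(2*π), D k θ := by
      rw [← intervalIntegral.integral_neg]
      apply intervalIntegral.integral_congr
      intro θ _
      exact hDshift θ
    have := h1.symm.trans h3
    linarith [this]
  set J : ℝ := ∫ θ in (0:ℝ)..(2*π), D 2 θ with hJ
  -- circle average expansion
  have hA : ∀ r : ℝ, 0 < r → r ≤ ρ →
      |(∫ θ in (0:ℝ)..(2*π), f (p + r • v θ)) - (2*π * f p + (r^2/2) * J)|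
        ≤ 2*π*(M/6)*r^4 := by
    intro r hr hrρ'
    have hmemθ : ∀ θ, p + r • v θ ∈ Metric.closedBall p ρ := by
      intro θ
      rw [Metric.mem_closedBall, dist_eq_norm]
      have h1 : ‖p + r • v θ - p‖ = ‖r • v θ‖ := by congr 1; abel
      rw [h1, norm_smul, Real.norm_eq_abs, abs_of_pos hr]
      calc r * ‖v θ‖ ≤ r * 1 := by
            exact mul_le_mul_of_nonneg_left (hvnorm θ) hr.le
        _ ≤ ρ := by linarith
    have hfc : Continuous fun θ => f (p + r • v θ) := by
      apply hf.continuousOn.comp_continuous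
      · exact continuous_const.add (hvcont.const_smul r)
      · exact fun θ => hball (hmemθ θ)
    set P : ℝ → ℝ := fun θ => f p + r * D 1 θ + (r^2/2) * D 2 θ + (r^3/6) * D 3 θ with hP
    have hPc : Continuous P := by
      apply (((continuous_const.add (continuous_const.mul (hDcont 1))).add
        (continuous_const.mul (hDcont 2))).add (continuous_const.mul (hDcont 3)))
    have hPint : (∫ θ in (0:ℝ)..(2*π), P θ) = 2*π * f p + (r^2/2) * J := by
      rw [hP]
      simp only
      rw [intervalIntegral.integral_add (f := fun θ => f p + r * D 1 θ + (r^2/2) * D 2 θ)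
          (g := fun θ => (r^3/6) * D 3 θ) (((intervalIntegrable_const).add
            ((continuous_const.mul (hDcont 1)).intervalIntegrable _ _)).add
            ((continuous_const.mul (hDcont 2)).intervalIntegrable _ _))
          ((continuous_const.mul (hDcont 3)).intervalIntegrable _ _),
        intervalIntegral.integral_add (f := fun θ => f p + r * D 1 θ)
          (g := fun θ => (r^2/2) * D 2 θ) ((intervalIntegrable_const).add
            ((continuous_const.mul (hDcont 1)).intervalIntegrable _ _))
          ((continuous_const.mul (hDcont 2)).intervalIntegrable _ _),
        intervalIntegral.integral_add (f := fun _ => f p) (g := fun θ => r * D 1 θ)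
          (intervalIntegrable_const)
          ((continuous_const.mul (hDcont 1)).intervalIntegrable _ _)]
      rw [intervalIntegral.integral_const_mul, intervalIntegral.integral_const_mul,
        intervalIntegral.integral_const_mul, intervalIntegral.integral_const,
        hodd 1 ⟨0, by norm_num⟩, hodd 3 ⟨1, by norm_num⟩]
      rw [← hJ]
      simp
      try ring
    have hEb : ∀ θ, |f (p + r • v θ) - P θ| ≤ (M/6) * r^4 := by
      intro θ
      exact taylor_circle_bound hΩ hf hball hM hr.le hrρ' (hvnorm θ)
    have hsplit : (∫ θ in (0:ℝ)..(2*π), f (p + r • v θ)) - (2*π * f p + (r^2/2) * J)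
        = ∫ θ in (0:ℝ)..(2*π), (f (p + r • v θ) - P θ) := by
      rw [intervalIntegral.integral_sub (hfc.intervalIntegrable _ _)
        (hPc.intervalIntegrable _ _), hPint]
    rw [hsplit]
    have := intervalIntegral.norm_integral_le_of_norm_le_const
      (C := (M/6) * r^4) (f := fun θ => f (p + r • v θ) - P θ) (a := 0) (b := 2*π)
      (fun θ _ => by rw [Real.norm_eq_abs]; exact hEb θ)
    rw [Real.norm_eq_abs] at this
    calc |∫ θ in (0:ℝ)..(2*π), (f (p + r • v θ) - P θ)| ≤ (M/6)*r^4 * |2*π - 0| := this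
      _ = 2*π*(M/6)*r^4 := by
          rw [show |2*π - 0| = 2*π from by rw [sub_zero]; exact abs_of_pos (by linarith [Real.pi_pos])]
          ring
  -- conclude
  refine ⟨M + 1, by positivity, ρ, hρ, ?_⟩
  intro R hR hRρ _
  have e1 : (∫ θ in (0:ℝ)..(2*π), f (x₀ + (R/2) * Real.cos θ, y₀ + (R/2) * Real.sin θ))
      = ∫ θ in (0:ℝ)..(2*π), f (p + (R/2) • v θ) := by
    apply intervalIntegral.integral_congr
    intro θ _
    congr 1
  have e2 : (∫ θ in (0:ℝ)..(2*π), f (x₀ + R * Real.cos θ, y₀ + R * Real.sin θ))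
      = ∫ θ in (0:ℝ)..(2*π), f (p + R • v θ) := by
    apply intervalIntegral.integral_congr
    intro θ _
    congr 1
  rw [e1, e2]
  set A₁ : ℝ := ∫ θ in (0:ℝ)..(2*π), f (p + (R/2) • v θ) with hA₁
  set A₂ : ℝ := ∫ θ in (0:ℝ)..(2*π), f (p + R • v θ) with hA₂
  have hE₁ := hA (R/2) (by linarith) (by linarith)
  have hE₂ := hA R hR hRρ
  have hπ : (π:ℝ) ≠ 0 := pi_ne_zero
  have key : f p - (1/3) * ((4/(2*π)) * A₁ - (1/(2*π)) * A₂)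
      = -(1/3) * ((4/(2*π)) * (A₁ - (2*π * f p + ((R/2)^2/2) * J))
        - (1/(2*π)) * (A₂ - (2*π * f p + (R^2/2) * J))) := by
    field_simp
    ring
  rw [key]
  have h4 : (0:ℝ) ≤ 4/(2*π) := by positivity
  have h5 : (0:ℝ) ≤ 1/(2*π) := by positivity
  calc |-(1/3) * ((4/(2*π)) * (A₁ - (2*π * f p + ((R/2)^2/2) * J))
        - (1/(2*π)) * (A₂ - (2*π * f p + (R^2/2) * J)))|
      = (1/3) * |(4/(2*π)) * (A₁ - (2*π * f p + ((R/2)^2/2) * J))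
        - (1/(2*π)) * (A₂ - (2*π * f p + (R^2/2) * J))| := by
        rw [abs_mul]; norm_num
    _ ≤ (1/3) * ((4/(2*π)) * |A₁ - (2*π * f p + ((R/2)^2/2) * J)|
        + (1/(2*π)) * |A₂ - (2*π * f p + (R^2/2) * J)|) := by
        apply mul_le_mul_of_nonneg_left _ (by norm_num : (0:ℝ) ≤ 1/3)
        calc |(4/(2*π)) * (A₁ - (2*π * f p + ((R/2)^2/2) * J))
              - (1/(2*π)) * (A₂ - (2*π * f p + (R^2/2) * J))|
            ≤ |(4/(2*π)) * (A₁ - (2*π * f p + ((R/2)^2/2) * J))|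
              + |(1/(2*π)) * (A₂ - (2*π * f p + (R^2/2) * J))| := abs_sub _ _
          _ = (4/(2*π)) * |A₁ - (2*π * f p + ((R/2)^2/2) * J)|
              + (1/(2*π)) * |A₂ - (2*π * f p + (R^2/2) * J)| := by
              rw [abs_mul, abs_mul, abs_of_nonneg h4, abs_of_nonneg h5]
    _ ≤ (1/3) * ((4/(2*π)) * (2*π*(M/6)*(R/2)^4) + (1/(2*π)) * (2*π*(M/6)*R^4)) := by
        gcongr
    _ = (5/72) * M * R^4 := by field_simp; ring
    _ ≤ (M + 1) * R^4 := by nlinarith [pow_nonneg hR.le 4]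
end

section
/- Let f ∈ C³(Ω) on an open set Ω ⊆ ℝ² containing the closed disk of radius r > 0 centered at the origin, and define g(θ) = f(r cos θ, r sin θ). Then for n = 4: ∫₀^{2π} g(θ) dθ = (2π/4)·∑_{k=0}^{3} g(2πk/4) + O(r³) as r → 0⁺. -/
open Real MeasureTheory Set

lemma quad_lin1 (m : ContinuousMultilinearMap ℝ (fun _ : Fin 1 => ℝ × ℝ) ℝ) (x y : ℝ) :
    m (fun _ => (x, y)) = x * m (fun _ => ((1:ℝ), (0:ℝ))) + y * m (fun _ => ((0:ℝ), (1:ℝ))) := by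
  have h : ∀ u : ℝ × ℝ, m (fun _ => u) = (continuousMultilinearCurryFin1 ℝ (ℝ × ℝ) ℝ m) u := by
    intro u
    rw [continuousMultilinearCurryFin1_apply]
    have h0 : (Fin.snoc 0 u : Fin 1 → ℝ × ℝ) = fun _ => u := by
      funext i
      fin_cases i
      simp [Fin.snoc]
    rw [h0]
  rw [h, h, h]
  have hxy : ((x, y) : ℝ × ℝ) = x • ((1:ℝ), (0:ℝ)) + y • ((0:ℝ), (1:ℝ)) := by
    simp [Prod.ext_iff]
  rw [hxy, _root_.map_add, _root_.map_smul, _root_.map_smul, smul_eq_mul, smul_eq_mul]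

lemma quad_lin2 (m : ContinuousMultilinearMap ℝ (fun _ : Fin 2 => ℝ × ℝ) ℝ) (x y : ℝ) :
    m (fun _ => (x, y)) =
      x * x * m ![((1:ℝ),(0:ℝ)), ((1:ℝ),(0:ℝ))] + x * y * m ![((1:ℝ),(0:ℝ)), ((0:ℝ),(1:ℝ))]
      + y * x * m ![((0:ℝ),(1:ℝ)), ((1:ℝ),(0:ℝ))] + y * y * m ![((0:ℝ),(1:ℝ)), ((0:ℝ),(1:ℝ))] := by
  have hcons : ∀ u w : ℝ × ℝ, (![u, w] : Fin 2 → ℝ × ℝ) = Fin.cons u (fun _ : Fin 1 => w) := by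
    intro u w
    funext i
    refine Fin.cases rfl (fun j => ?_) i
    rw [Subsingleton.elim j 0]
    rfl
  have hconst : (fun _ : Fin 2 => ((x,y) : ℝ × ℝ)) = ![(x,y), (x,y)] := by
    funext i; refine Fin.cases rfl (fun j => ?_) i; rw [Subsingleton.elim j 0]; rfl
  have hc : ∀ u w : ℝ × ℝ, m ![u, w] = (m.curryLeft u) (fun _ : Fin 1 => w) := by
    intro u w
    rw [ContinuousMultilinearMap.curryLeft_apply, hcons]
  -- linearity in first slot
  have hfst : ∀ w : ℝ × ℝ, m ![((x,y) : ℝ × ℝ), w]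
      = x * m ![((1:ℝ),(0:ℝ)), w] + y * m ![((0:ℝ),(1:ℝ)), w] := by
    intro w
    rw [hc, hc, hc]
    have hxy : ((x, y) : ℝ × ℝ) = x • ((1:ℝ), (0:ℝ)) + y • ((0:ℝ), (1:ℝ)) := by
      simp [Prod.ext_iff]
    rw [hxy, _root_.map_add, _root_.map_smul, _root_.map_smul]
    simp
  have hsnd : ∀ u : ℝ × ℝ, m ![u, ((x,y) : ℝ × ℝ)]
      = x * m ![u, ((1:ℝ),(0:ℝ))] + y * m ![u, ((0:ℝ),(1:ℝ))] := by
    intro u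
    rw [hc, hc, hc, quad_lin1]
  rw [hconst, hfst, hsnd, hsnd]
  ring


lemma quad_remainder {f : ℝ × ℝ → ℝ} {Ω : Set (ℝ × ℝ)} (hΩ : IsOpen Ω)
    (hf : ContDiffOn ℝ 3 f Ω) {ε M : ℝ} (hε : 0 < ε)
    (hKΩ : Metric.closedBall ((0:ℝ),(0:ℝ)) ε ⊆ Ω)
    (hM : ∀ x ∈ Metric.closedBall ((0:ℝ),(0:ℝ)) ε, ‖iteratedFDerivWithin ℝ 3 f Ω x‖ ≤ M)
    (hM0 : 0 ≤ M) {r : ℝ} (hr : 0 < r) (hrε : r ≤ ε) (θ : ℝ) :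
    |f (r * cos θ, r * sin θ) - (f ((0:ℝ),(0:ℝ))
      + r * (iteratedFDerivWithin ℝ 1 f Ω ((0:ℝ),(0:ℝ)) (fun _ => (cos θ, sin θ)))
      + r^2/2 * (iteratedFDerivWithin ℝ 2 f Ω ((0:ℝ),(0:ℝ)) (fun _ => (cos θ, sin θ))))|
      ≤ M * r^3 / 2 := by
  set v : ℝ × ℝ := (cos θ, sin θ) with hv
  have hvnorm : ‖v‖ ≤ 1 := by
    rw [Prod.norm_def]
    simp only [Real.norm_eq_abs]
    exact max_le (abs_cos_le_one θ) (abs_sin_le_one θ)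
  set L : ℝ →L[ℝ] ℝ × ℝ := ContinuousLinearMap.toSpanSingleton ℝ v with hL
  have hLapp : ∀ t : ℝ, L t = t • v := fun t => rfl
  have hball : ∀ t ∈ Icc (0:ℝ) r, L t ∈ Metric.closedBall ((0:ℝ),(0:ℝ)) ε := by
    intro t ht
    have h0 : ((0:ℝ),(0:ℝ)) = (0 : ℝ × ℝ) := rfl
    rw [h0, Metric.mem_closedBall, dist_zero_right, hLapp, norm_smul]
    calc ‖t‖ * ‖v‖ ≤ r * 1 := by
          apply mul_le_mul _ hvnorm (norm_nonneg _) hr.le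
          rw [Real.norm_eq_abs, abs_of_nonneg ht.1]; exact ht.2
      _ ≤ ε := by linarith
  have hmaps : ∀ t ∈ Icc (0:ℝ) r, L t ∈ Ω := fun t ht => hKΩ (hball t ht)
  have hsub : Icc (0:ℝ) r ⊆ L ⁻¹' Ω := fun t ht => hmaps t ht
  have hφ : ContDiffOn ℝ 3 (f ∘ L) (Icc 0 r) :=
    hf.comp (L.contDiff.contDiffOn) hmaps
  have hUD : UniqueDiffOn ℝ (Icc (0:ℝ) r) := uniqueDiffOn_Icc hr
  have hseries : HasFTaylorSeriesUpToOn 3 (f ∘ L)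
      (fun t k => (ftaylorSeriesWithin ℝ f Ω (L t) k).compContinuousLinearMap fun _ => L)
      (Icc 0 r) :=
    ((hf.ftaylorSeriesWithin hΩ.uniqueDiffOn).compContinuousLinearMap L).mono hsub
  have key : ∀ k : ℕ, k ≤ 3 → ∀ t ∈ Icc (0:ℝ) r,
      iteratedDerivWithin k (f ∘ L) (Icc 0 r) t
        = iteratedFDerivWithin ℝ k f Ω (L t) (fun _ => v) := by
    intro k hk t ht
    rw [iteratedDerivWithin_eq_iteratedFDerivWithin,
      ← hseries.eq_iteratedFDerivWithin_of_uniqueDiffOn (by exact_mod_cast hk) hUD ht]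
    rw [ContinuousMultilinearMap.compContinuousLinearMap_apply]
    congr 1
    funext i
    rw [hLapp, one_smul]
  have hC : ∀ t ∈ Icc (0:ℝ) r, ‖iteratedDerivWithin 3 (f ∘ L) (Icc 0 r) t‖ ≤ M := by
    intro t ht
    rw [key 3 le_rfl t ht]
    calc ‖iteratedFDerivWithin ℝ 3 f Ω (L t) (fun _ => v)‖
        ≤ ‖iteratedFDerivWithin ℝ 3 f Ω (L t)‖ * ∏ _i : Fin 3, ‖v‖ :=
          ContinuousMultilinearMap.le_opNorm _ _
      _ ≤ M * 1 := by
          apply mul_le_mul (hM _ (hball t ht)) _ (by positivity) hM0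
          rw [Finset.prod_const]
          simp only [Finset.card_univ, Fintype.card_fin]
          exact pow_le_one₀ (norm_nonneg _) hvnorm
      _ = M := mul_one M
  have hbound := taylor_mean_remainder_bound (le_of_lt hr)
    (by exact_mod_cast hφ : ContDiffOn ℝ ((2:ℕ) + 1) (f ∘ L) (Icc 0 r))
    (right_mem_Icc.2 hr.le) hC
  have htay : taylorWithinEval (f ∘ L) 2 (Icc 0 r) 0 r
      = f ((0:ℝ),(0:ℝ))
      + r * (iteratedFDerivWithin ℝ 1 f Ω ((0:ℝ),(0:ℝ)) (fun _ => v))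
      + r^2/2 * (iteratedFDerivWithin ℝ 2 f Ω ((0:ℝ),(0:ℝ)) (fun _ => v)) := by
    rw [taylor_within_apply]
    have h0 : (0:ℝ) ∈ Icc (0:ℝ) r := left_mem_Icc.2 hr.le
    have hL0 : L 0 = ((0:ℝ),(0:ℝ)) := by rw [hLapp, zero_smul]; rfl
    rw [Finset.sum_range_succ, Finset.sum_range_succ, Finset.sum_range_one]
    rw [key 0 (by norm_num) 0 h0, key 1 (by norm_num) 0 h0, key 2 (by norm_num) 0 h0, hL0]
    have hfd0 : iteratedFDerivWithin ℝ 0 f Ω ((0:ℝ),(0:ℝ)) (fun _ => v) = f ((0:ℝ),(0:ℝ)) := by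
      simp [iteratedFDerivWithin_zero_apply]
    rw [hfd0]
    simp only [smul_eq_mul, pow_zero, pow_one, sub_zero, Nat.factorial_zero,
      Nat.factorial_one, Nat.factorial_two, Nat.cast_one, Nat.cast_ofNat]
    ring
  have hrv : (f ∘ L) r = f (r * cos θ, r * sin θ) := by
    simp only [Function.comp_apply, hLapp, hv, Prod.smul_mk, smul_eq_mul]
  rw [← hrv, ← htay]
  calc |(f ∘ L) r - taylorWithinEval (f ∘ L) 2 (Icc 0 r) 0 r|
      ≤ M * (r - 0) ^ (2 + 1) / (Nat.factorial 2 : ℝ) := hbound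
    _ = M * r ^ 3 / 2 := by norm_num [Nat.factorial]


lemma integral_trig (c0 c1 c2 c3 c4 c5 : ℝ) :
    (∫ θ in (0:ℝ)..(2*π), (c0 + c1 * cos θ + c2 * sin θ + c3 * cos θ ^ 2
      + c4 * (sin θ * cos θ) + c5 * sin θ ^ 2))
    = 2*π*c0 + π*c3 + π*c5 := by
  have I0 : IntervalIntegrable (fun _ : ℝ => c0) MeasureTheory.volume (0:ℝ) (2*π) :=
    intervalIntegrable_const
  have I1 : IntervalIntegrable (fun θ : ℝ => c1 * cos θ) MeasureTheory.volume (0:ℝ) (2*π) :=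
    (continuous_const.mul continuous_cos).intervalIntegrable _ _
  have I2 : IntervalIntegrable (fun θ : ℝ => c2 * sin θ) MeasureTheory.volume (0:ℝ) (2*π) :=
    (continuous_const.mul continuous_sin).intervalIntegrable _ _
  have I3 : IntervalIntegrable (fun θ : ℝ => c3 * cos θ ^ 2) MeasureTheory.volume (0:ℝ) (2*π) :=
    (continuous_const.mul (continuous_cos.pow 2)).intervalIntegrable _ _
  have I4 : IntervalIntegrable (fun θ : ℝ => c4 * (sin θ * cos θ)) MeasureTheory.volume (0:ℝ) (2*π) :=
    (continuous_const.mul (continuous_sin.mul continuous_cos)).intervalIntegrable _ _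
  have I5 : IntervalIntegrable (fun θ : ℝ => c5 * sin θ ^ 2) MeasureTheory.volume (0:ℝ) (2*π) :=
    (continuous_const.mul (continuous_sin.pow 2)).intervalIntegrable _ _
  rw [intervalIntegral.integral_add ((((I0.add I1).add I2).add I3).add I4) I5,
      intervalIntegral.integral_add (((I0.add I1).add I2).add I3) I4,
      intervalIntegral.integral_add ((I0.add I1).add I2) I3,
      intervalIntegral.integral_add (I0.add I1) I2,
      intervalIntegral.integral_add I0 I1,
      intervalIntegral.integral_const_mul, intervalIntegral.integral_const_mul,
      intervalIntegral.integral_const_mul, intervalIntegral.integral_const_mul,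
      intervalIntegral.integral_const_mul,
      intervalIntegral.integral_const, integral_cos, integral_sin,
      integral_cos_sq, integral_sin_mul_cos₁, integral_sin_sq]
  simp [Real.sin_two_pi, Real.cos_two_pi]
  ring

/-- 4-point quadrature on the circle of radius `r` has `O(r³)` error for `C³` functions. -/
theorem stmt_2 (f : ℝ × ℝ → ℝ) (Ω : Set (ℝ × ℝ)) (hΩ : IsOpen Ω)
    (hmem : ((0:ℝ), (0:ℝ)) ∈ Ω) (hf : ContDiffOn ℝ 3 f Ω) :
    ∃ C > (0:ℝ), ∃ r₀ > (0:ℝ), ∀ r : ℝ, 0 < r → r ≤ r₀ →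
      Metric.closedBall ((0:ℝ), (0:ℝ)) r ⊆ Ω →
      |(∫ θ in (0:ℝ)..(2*π), f (r * Real.cos θ, r * Real.sin θ))
        - (2*π/4) * ∑ k ∈ Finset.range 4,
            f (r * Real.cos (2*π*k/4), r * Real.sin (2*π*k/4))|
        ≤ C * r^3 := by
  obtain ⟨δ, hδ, hballδ⟩ := Metric.isOpen_iff.1 hΩ _ hmem
  set ε := δ/2 with hε_def
  have hε : 0 < ε := by positivity
  have hKΩ : Metric.closedBall ((0:ℝ),(0:ℝ)) ε ⊆ Ω :=
    (Metric.closedBall_subset_ball (by rw [hε_def]; linarith)).trans hballδ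
  have hK : IsCompact (Metric.closedBall ((0:ℝ),(0:ℝ)) ε) := isCompact_closedBall _ _
  have hcont : ContinuousOn (fun x => iteratedFDerivWithin ℝ 3 f Ω x)
      (Metric.closedBall ((0:ℝ),(0:ℝ)) ε) :=
    (hf.continuousOn_iteratedFDerivWithin (by norm_num) hΩ.uniqueDiffOn).mono hKΩ
  obtain ⟨M, hM⟩ := hK.exists_bound_of_continuousOn hcont
  set M' := max M 0 with hM'def
  have hM'0 : 0 ≤ M' := le_max_right _ _
  have hM' : ∀ x ∈ Metric.closedBall ((0:ℝ),(0:ℝ)) ε,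
      ‖iteratedFDerivWithin ℝ 3 f Ω x‖ ≤ M' := fun x hx => (hM x hx).trans (le_max_left _ _)
  have hπ := Real.pi_pos
  refine ⟨2*π*M' + 1, by nlinarith, ε, hε, ?_⟩
  intro r hr hrε _
  set f00 := f ((0:ℝ),(0:ℝ)) with hf00
  set D1 := iteratedFDerivWithin ℝ 1 f Ω ((0:ℝ),(0:ℝ)) with hD1
  set D2 := iteratedFDerivWithin ℝ 2 f Ω ((0:ℝ),(0:ℝ)) with hD2
  set a1 := D1 (fun _ => ((1:ℝ),(0:ℝ))) with ha1
  set a2 := D1 (fun _ => ((0:ℝ),(1:ℝ))) with ha2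
  set b11 := D2 ![((1:ℝ),(0:ℝ)), ((1:ℝ),(0:ℝ))] with hb11
  set b12 := D2 ![((1:ℝ),(0:ℝ)), ((0:ℝ),(1:ℝ))] with hb12
  set b21 := D2 ![((0:ℝ),(1:ℝ)), ((1:ℝ),(0:ℝ))] with hb21
  set b22 := D2 ![((0:ℝ),(1:ℝ)), ((0:ℝ),(1:ℝ))] with hb22
  set P : ℝ → ℝ := fun θ => f00 + (r * a1) * cos θ + (r * a2) * sin θ
    + (r^2/2 * b11) * cos θ ^ 2 + (r^2/2 * (b12 + b21)) * (sin θ * cos θ)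
    + (r^2/2 * b22) * sin θ ^ 2 with hP
  set g : ℝ → ℝ := fun θ => f (r * cos θ, r * sin θ) with hg
  -- pointwise remainder bound
  have hrem : ∀ θ : ℝ, |g θ - P θ| ≤ M' * r^3 / 2 := by
    intro θ
    have h := quad_remainder hΩ hf hε hKΩ hM' hM'0 hr hrε θ
    have hexp : f00 + r * (D1 (fun _ => (cos θ, sin θ)))
        + r^2/2 * (D2 (fun _ => (cos θ, sin θ))) = P θ := by
      rw [quad_lin1 D1, quad_lin2 D2, hP]
      ring
    rw [show |g θ - P θ| = |g θ - (f00 + r * (D1 (fun _ => (cos θ, sin θ)))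
        + r^2/2 * (D2 (fun _ => (cos θ, sin θ))))| from by rw [hexp]]
    exact h
  -- integral of P
  have hIP : (∫ θ in (0:ℝ)..(2*π), P θ)
      = 2*π*f00 + π*(r^2/2*b11) + π*(r^2/2*b22) := by
    rw [hP]
    exact integral_trig f00 (r*a1) (r*a2) (r^2/2*b11) (r^2/2*(b12+b21)) (r^2/2*b22)
  -- quadrature of P
  have hQP : (2*π/4) * ∑ k ∈ Finset.range 4, P (2*π*(k:ℝ)/4)
      = 2*π*f00 + π*(r^2/2*b11) + π*(r^2/2*b22) := by
    have e0 : 2*π*((0:ℕ):ℝ)/4 = 0 := by push_cast; ring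
    have e1 : 2*π*((1:ℕ):ℝ)/4 = π/2 := by push_cast; ring
    have e2 : 2*π*((2:ℕ):ℝ)/4 = π := by push_cast; ring
    have e3 : 2*π*((3:ℕ):ℝ)/4 = π/2 + π := by push_cast; ring
    rw [Finset.sum_range_succ, Finset.sum_range_succ, Finset.sum_range_succ,
      Finset.sum_range_one, e0, e1, e2, e3]
    simp only [hP, Real.cos_zero, Real.sin_zero, Real.cos_pi_div_two, Real.sin_pi_div_two,
      Real.cos_pi, Real.sin_pi, Real.cos_add_pi, Real.sin_add_pi]
    ring
  -- continuity and membership of the circle path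
  have hmapsθ : ∀ θ : ℝ, (r * cos θ, r * sin θ) ∈ Ω := by
    intro θ
    apply hKΩ
    rw [Metric.mem_closedBall, Prod.dist_eq]
    simp only [Real.dist_eq, sub_zero]
    have h1 : |r * cos θ| ≤ ε := by
      rw [abs_mul, abs_of_pos hr]
      calc r * |cos θ| ≤ r * 1 := mul_le_mul_of_nonneg_left (abs_cos_le_one θ) hr.le
        _ = r := mul_one r
        _ ≤ ε := hrε
    have h2 : |r * sin θ| ≤ ε := by
      rw [abs_mul, abs_of_pos hr]
      calc r * |sin θ| ≤ r * 1 := mul_le_mul_of_nonneg_left (abs_sin_le_one θ) hr.le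
        _ = r := mul_one r
        _ ≤ ε := hrε
    exact max_le h1 h2
  have hgc : Continuous g := by
    have hfc := hf.continuousOn
    exact hfc.comp_continuous (by fun_prop) hmapsθ
  have hPc : Continuous P := by fun_prop
  have hIg : IntervalIntegrable g volume (0:ℝ) (2*π) := hgc.intervalIntegrable _ _
  have hIPi : IntervalIntegrable P volume (0:ℝ) (2*π) := hPc.intervalIntegrable _ _
  -- bound the integral of the remainder
  have hintbound : |∫ θ in (0:ℝ)..(2*π), (g θ - P θ)| ≤ M' * r^3 / 2 * |2*π - 0| := by
    have h := intervalIntegral.norm_integral_le_of_norm_le_const (a := (0:ℝ)) (b := 2*π)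
      (C := M' * r^3 / 2) (f := fun θ => g θ - P θ) (fun x _ => hrem x)
    exact h
  -- bound the quadrature of the remainder
  have hsumbound : |∑ k ∈ Finset.range 4, (g (2*π*(k:ℝ)/4) - P (2*π*(k:ℝ)/4))|
      ≤ 4 * (M' * r^3 / 2) := by
    calc |∑ k ∈ Finset.range 4, (g (2*π*(k:ℝ)/4) - P (2*π*(k:ℝ)/4))|
        ≤ ∑ k ∈ Finset.range 4, |g (2*π*(k:ℝ)/4) - P (2*π*(k:ℝ)/4)| :=
          Finset.abs_sum_le_sum_abs _ _
      _ ≤ ∑ _k ∈ Finset.range 4, (M' * r^3 / 2) := Finset.sum_le_sum (fun k _ => hrem _)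
      _ = 4 * (M' * r^3 / 2) := by
          rw [Finset.sum_const, Finset.card_range]; push_cast; ring
  -- split the error
  have hsplit : (∫ θ in (0:ℝ)..(2*π), g θ) - (2*π/4) * ∑ k ∈ Finset.range 4, g (2*π*(k:ℝ)/4)
      = (∫ θ in (0:ℝ)..(2*π), (g θ - P θ))
        - (2*π/4) * ∑ k ∈ Finset.range 4, (g (2*π*(k:ℝ)/4) - P (2*π*(k:ℝ)/4)) := by
    rw [intervalIntegral.integral_sub hIg hIPi, Finset.sum_sub_distrib, mul_sub]
    have h1 := hIP
    have h2 := hQP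
    linarith
  have hgoal2 : (∑ k ∈ Finset.range 4, f (r * Real.cos (2*π*k/4), r * Real.sin (2*π*k/4)))
      = ∑ k ∈ Finset.range 4, g (2*π*(k:ℝ)/4) := rfl
  have hmain : |(∫ θ in (0:ℝ)..(2*π), g θ)
      - (2*π/4) * ∑ k ∈ Finset.range 4, g (2*π*(k:ℝ)/4)| ≤ (2*π*M' + 1) * r^3 := by
    rw [hsplit]
    calc |(∫ θ in (0:ℝ)..(2*π), (g θ - P θ))
          - (2*π/4) * ∑ k ∈ Finset.range 4, (g (2*π*(k:ℝ)/4) - P (2*π*(k:ℝ)/4))|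
        ≤ |(∫ θ in (0:ℝ)..(2*π), (g θ - P θ))|
          + |(2*π/4) * ∑ k ∈ Finset.range 4, (g (2*π*(k:ℝ)/4) - P (2*π*(k:ℝ)/4))| :=
          abs_sub _ _
      _ = |(∫ θ in (0:ℝ)..(2*π), (g θ - P θ))|
          + (2*π/4) * |∑ k ∈ Finset.range 4, (g (2*π*(k:ℝ)/4) - P (2*π*(k:ℝ)/4))| := by
          rw [abs_mul, abs_of_pos (by positivity : (0:ℝ) < 2*π/4)]
      _ ≤ M' * r^3 / 2 * |2*π - 0| + (2*π/4) * (4 * (M' * r^3 / 2)) :=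
          add_le_add hintbound (mul_le_mul_of_nonneg_left hsumbound (by positivity))
      _ = 2*π*M' * r^3 := by
          rw [sub_zero, abs_of_pos (by positivity : (0:ℝ) < 2*π)]
          ring
      _ ≤ (2*π*M' + 1) * r^3 := by
          rw [add_mul, one_mul]
          exact le_add_of_nonneg_right (pow_pos hr 3).le
  calc |(∫ θ in (0:ℝ)..(2*π), g θ)
      - (2*π/4) * ∑ k ∈ Finset.range 4, f (r * Real.cos (2*π*k/4), r * Real.sin (2*π*k/4))|
      = |(∫ θ in (0:ℝ)..(2*π), g θ)
        - (2*π/4) * ∑ k ∈ Finset.range 4, g (2*π*(k:ℝ)/4)| := by rw [hgoal2]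
    _ ≤ (2*π*M' + 1) * r^3 := hmain
end
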